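/- Let g = e^{2f₁}g₁ + e^{2f₂}g₂ be a conformal product metric on M = M₁ × M₂ and let ∇ be the Weyl connection of [g] whose Lee form with respect to g is θ^g = −d₁f₂ − d₂f₁. Then ∇_{X₁}X₂ = 0 for all vector fields X₁ lifted from M₁ and X₂ lifted from M₂; in particular ∇ preserves the distributions TM₁ and TM₂. -/

import Mathlib

open Real
open scoped ContDiff

noncomputable section

/-- A Riemannian metric on the "vector space manifold" `E`, encoded as a smooth family of
symmetric positive definite bilinear forms, given as a raw function `g : E → E → E → ℝ`. -/
structure IsRiemannianMetric {E : Type*} [NormedAddCommGroup E] [NormedSpace ℝ E]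
    (g : E → E → E → ℝ) : Prop where
  smooth : ∀ u v : E, ContDiff ℝ ∞ (fun x => g x u v)
  symm : ∀ x u v, g x u v = g x v u
  add_left : ∀ x u u' v, g x (u + u') v = g x u v + g x u' v
  smul_left : ∀ x (c : ℝ) (u v : E), g x (c • u) v = c * g x u v
  posdef : ∀ x (v : E), v ≠ 0 → 0 < g x v v

/-- `D` is the Levi-Civita covariant derivative of the metric `g`: it is metric
(`∇ g = 0`, expressed through the Leibniz rule for `g`) and torsion-free. -/
structure IsLeviCivita {E : Type*} [NormedAddCommGroup E] [NormedSpace ℝ E]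
    (g : E → E → E → ℝ) (D : (E → E) → (E → E) → (E → E)) : Prop where
  compat : ∀ X Y Z : E → E, ContDiff ℝ ∞ X → ContDiff ℝ ∞ Y → ContDiff ℝ ∞ Z → ∀ x,
    fderiv ℝ (fun y => g y (Y y) (Z y)) x (X x) =
      g x (D X Y x) (Z x) + g x (Y x) (D X Z x)
  torsion_free : ∀ X Y : E → E, ContDiff ℝ ∞ X → ContDiff ℝ ∞ Y → ∀ x,
    D X Y x - D Y X x = fderiv ℝ Y x (X x) - fderiv ℝ X x (Y x)

/-- `D` is a Weyl connection for the (conformal class of the) metric `g`, with Lee form `θ`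
with respect to `g`: it is torsion-free and satisfies `∇ g = -2 θ ⊗ g`. -/
structure IsWeylConnection {E : Type*} [NormedAddCommGroup E] [NormedSpace ℝ E]
    (g : E → E → E → ℝ) (θ : E → E → ℝ) (D : (E → E) → (E → E) → (E → E)) : Prop where
  compat : ∀ X Y Z : E → E, ContDiff ℝ ∞ X → ContDiff ℝ ∞ Y → ContDiff ℝ ∞ Z → ∀ x,
    fderiv ℝ (fun y => g y (Y y) (Z y)) x (X x) =
      -2 * θ x (X x) * g x (Y x) (Z x) + g x (D X Y x) (Z x) + g x (Y x) (D X Z x)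
  torsion_free : ∀ X Y : E → E, ContDiff ℝ ∞ X → ContDiff ℝ ∞ Y → ∀ x,
    D X Y x - D Y X x = fderiv ℝ Y x (X x) - fderiv ℝ X x (Y x)

variable {E₁ E₂ : Type*} [NormedAddCommGroup E₁] [NormedSpace ℝ E₁]
  [NormedAddCommGroup E₂] [NormedSpace ℝ E₂]

/-- The vector field on `M₁ × M₂` obtained by lifting a vector field on the factor `M₁`. -/
def liftVF₁ (X : E₁ → E₁) : E₁ × E₂ → E₁ × E₂ := fun x => (X x.1, 0)

/-- The vector field on `M₁ × M₂` obtained by lifting a vector field on the factor `M₂`. -/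
def liftVF₂ (X : E₂ → E₂) : E₁ × E₂ → E₁ × E₂ := fun x => (0, X x.2)

/-- The conformal product metric `e^{2 f₁} g₁ + e^{2 f₂} g₂` on `M₁ × M₂`. -/
def conformalProductMetric (f₁ f₂ : E₁ × E₂ → ℝ) (g₁ : E₁ → E₁ → E₁ → ℝ)
    (g₂ : E₂ → E₂ → E₂ → ℝ) : (E₁ × E₂) → (E₁ × E₂) → (E₁ × E₂) → ℝ :=
  fun x u v => exp (2 * f₁ x) * g₁ x.1 u.1 v.1 + exp (2 * f₂ x) * g₂ x.2 u.2 v.2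

end

section Helpers

theorem IsRiemannianMetric.zero_left {E : Type*} [NormedAddCommGroup E] [NormedSpace ℝ E]
    {g : E → E → E → ℝ} (hg : IsRiemannianMetric g) (z v : E) : g z 0 v = 0 := by
  have h := hg.smul_left z 0 0 v
  simpa using h

theorem IsRiemannianMetric.zero_right {E : Type*} [NormedAddCommGroup E] [NormedSpace ℝ E]
    {g : E → E → E → ℝ} (hg : IsRiemannianMetric g) (z u : E) : g z u 0 = 0 := by
  rw [hg.symm]; exact hg.zero_left z u

theorem IsRiemannianMetric.neg_left {E : Type*} [NormedAddCommGroup E] [NormedSpace ℝ E]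
    {g : E → E → E → ℝ} (hg : IsRiemannianMetric g) (z u v : E) : g z (-u) v = -g z u v := by
  have h := hg.smul_left z (-1) u v
  simpa using h

theorem IsRiemannianMetric.sub_left {E : Type*} [NormedAddCommGroup E] [NormedSpace ℝ E]
    {g : E → E → E → ℝ} (hg : IsRiemannianMetric g) (z u u' v : E) :
    g z (u - u') v = g z u v - g z u' v := by
  rw [sub_eq_add_neg, hg.add_left, hg.neg_left]; ring

variable {E₁ E₂ : Type*} [NormedAddCommGroup E₁] [NormedSpace ℝ E₁]
  [NormedAddCommGroup E₂] [NormedSpace ℝ E₂]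
  {g₁ : E₁ → E₁ → E₁ → ℝ} {g₂ : E₂ → E₂ → E₂ → ℝ}
  {f₁ f₂ : E₁ × E₂ → ℝ}

theorem Gsymm (hg₁ : IsRiemannianMetric g₁) (hg₂ : IsRiemannianMetric g₂)
    (x u v : E₁ × E₂) :
    conformalProductMetric f₁ f₂ g₁ g₂ x u v = conformalProductMetric f₁ f₂ g₁ g₂ x v u := by
  unfold conformalProductMetric
  rw [hg₁.symm, hg₂.symm]

theorem Gaddl (hg₁ : IsRiemannianMetric g₁) (hg₂ : IsRiemannianMetric g₂)
    (x u v w : E₁ × E₂) :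
    conformalProductMetric f₁ f₂ g₁ g₂ x (u + v) w
      = conformalProductMetric f₁ f₂ g₁ g₂ x u w + conformalProductMetric f₁ f₂ g₁ g₂ x v w := by
  simp only [conformalProductMetric, Prod.fst_add, Prod.snd_add, hg₁.add_left, hg₂.add_left]
  ring

theorem Gsubl (hg₁ : IsRiemannianMetric g₁) (hg₂ : IsRiemannianMetric g₂)
    (x u v w : E₁ × E₂) :
    conformalProductMetric f₁ f₂ g₁ g₂ x (u - v) w
      = conformalProductMetric f₁ f₂ g₁ g₂ x u w - conformalProductMetric f₁ f₂ g₁ g₂ x v w := by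
  simp only [conformalProductMetric, Prod.fst_sub, Prod.snd_sub, hg₁.sub_left, hg₂.sub_left]
  ring

theorem Gp1 (hg₂ : IsRiemannianMetric g₂) (x : E₁ × E₂) (p : E₁ × E₂) (w : E₁) :
    conformalProductMetric f₁ f₂ g₁ g₂ x p (w, 0)
      = Real.exp (2 * f₁ x) * g₁ x.1 p.1 w := by
  simp [conformalProductMetric, hg₂.zero_right]

theorem Gp2 (hg₁ : IsRiemannianMetric g₁) (x : E₁ × E₂) (p : E₁ × E₂) (w : E₂) :
    conformalProductMetric f₁ f₂ g₁ g₂ x p (0, w)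
      = Real.exp (2 * f₂ x) * g₂ x.2 p.2 w := by
  simp [conformalProductMetric, hg₁.zero_right]

theorem dg_const_comm {Dg : (E₁ × E₂ → E₁ × E₂) → (E₁ × E₂ → E₁ × E₂) → (E₁ × E₂ → E₁ × E₂)}
    (hDg : IsLeviCivita (conformalProductMetric f₁ f₂ g₁ g₂) Dg) (x u v : E₁ × E₂) :
    Dg (fun _ => u) (fun _ => v) x = Dg (fun _ => v) (fun _ => u) x := by
  have h := hDg.torsion_free (fun _ => u) (fun _ => v) contDiff_const contDiff_const x
  rw [fderiv_const_apply, fderiv_const_apply] at h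
  simpa [sub_eq_zero] using h

theorem konst {Dg : (E₁ × E₂ → E₁ × E₂) → (E₁ × E₂ → E₁ × E₂) → (E₁ × E₂ → E₁ × E₂)}
    (hDg : IsLeviCivita (conformalProductMetric f₁ f₂ g₁ g₂) Dg)
    (hg₁ : IsRiemannianMetric g₁) (hg₂ : IsRiemannianMetric g₂)
    (x u v d : E₁ × E₂) :
    2 * conformalProductMetric f₁ f₂ g₁ g₂ x (Dg (fun _ => u) (fun _ => v) x) d
      = fderiv ℝ (fun y => conformalProductMetric f₁ f₂ g₁ g₂ y v d) x u
        + fderiv ℝ (fun y => conformalProductMetric f₁ f₂ g₁ g₂ y u d) x v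
        - fderiv ℝ (fun y => conformalProductMetric f₁ f₂ g₁ g₂ y u v) x d := by
  have c₁ : fderiv ℝ (fun y => conformalProductMetric f₁ f₂ g₁ g₂ y v d) x u
      = conformalProductMetric f₁ f₂ g₁ g₂ x (Dg (fun _ => u) (fun _ => v) x) d
        + conformalProductMetric f₁ f₂ g₁ g₂ x v (Dg (fun _ => u) (fun _ => d) x) :=
    hDg.compat _ _ _ contDiff_const contDiff_const contDiff_const x
  have c₂ : fderiv ℝ (fun y => conformalProductMetric f₁ f₂ g₁ g₂ y u d) x v
      = conformalProductMetric f₁ f₂ g₁ g₂ x (Dg (fun _ => v) (fun _ => u) x) d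
        + conformalProductMetric f₁ f₂ g₁ g₂ x u (Dg (fun _ => v) (fun _ => d) x) :=
    hDg.compat _ _ _ contDiff_const contDiff_const contDiff_const x
  have c₃ : fderiv ℝ (fun y => conformalProductMetric f₁ f₂ g₁ g₂ y u v) x d
      = conformalProductMetric f₁ f₂ g₁ g₂ x (Dg (fun _ => d) (fun _ => u) x) v
        + conformalProductMetric f₁ f₂ g₁ g₂ x u (Dg (fun _ => d) (fun _ => v) x) :=
    hDg.compat _ _ _ contDiff_const contDiff_const contDiff_const x
  rw [c₁, c₂, c₃, dg_const_comm hDg x v u, dg_const_comm hDg x d u, dg_const_comm hDg x d v]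
  have s₁ := Gsymm (f₁ := f₁) (f₂ := f₂) hg₁ hg₂ x v (Dg (fun _ => u) (fun _ => d) x)
  linarith [s₁]

theorem dconst (hg₁ : IsRiemannianMetric g₁) (hg₂ : IsRiemannianMetric g₂)
    (hf₁ : ContDiff ℝ ∞ f₁) (hf₂ : ContDiff ℝ ∞ f₂) (x : E₁ × E₂) (u v d : E₁ × E₂) :
    fderiv ℝ (fun y => conformalProductMetric f₁ f₂ g₁ g₂ y u v) x d
      = 2 * fderiv ℝ f₁ x d * (Real.exp (2 * f₁ x) * g₁ x.1 u.1 v.1)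
        + Real.exp (2 * f₁ x) * fderiv ℝ (fun z => g₁ z u.1 v.1) x.1 d.1
        + 2 * fderiv ℝ f₂ x d * (Real.exp (2 * f₂ x) * g₂ x.2 u.2 v.2)
        + Real.exp (2 * f₂ x) * fderiv ℝ (fun z => g₂ z u.2 v.2) x.2 d.2 := by
  have hd : (∞ : WithTop ℕ∞) ≠ 0 := by simp
  have h₂ : HasFDerivAt (fun y => Real.exp (2 * f₁ y))
      (Real.exp (2 * f₁ x) • ((2:ℝ) • fderiv ℝ f₁ x)) x :=
    (((hf₁.differentiable hd x).hasFDerivAt).const_mul 2).exp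
  have h₃ : HasFDerivAt (fun y : E₁ × E₂ => g₁ y.1 u.1 v.1)
      ((fderiv ℝ (fun z => g₁ z u.1 v.1) x.1).comp (ContinuousLinearMap.fst ℝ E₁ E₂)) x :=
    (((hg₁.smooth u.1 v.1).differentiable hd x.1).hasFDerivAt).comp x hasFDerivAt_fst
  have h₂' : HasFDerivAt (fun y => Real.exp (2 * f₂ y))
      (Real.exp (2 * f₂ x) • ((2:ℝ) • fderiv ℝ f₂ x)) x :=
    (((hf₂.differentiable hd x).hasFDerivAt).const_mul 2).exp
  have h₃' : HasFDerivAt (fun y : E₁ × E₂ => g₂ y.2 u.2 v.2)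
      ((fderiv ℝ (fun z => g₂ z u.2 v.2) x.2).comp (ContinuousLinearMap.snd ℝ E₁ E₂)) x :=
    (((hg₂.smooth u.2 v.2).differentiable hd x.2).hasFDerivAt).comp x hasFDerivAt_snd
  have h : HasFDerivAt (fun y => conformalProductMetric f₁ f₂ g₁ g₂ y u v)
      ((Real.exp (2 * f₁ x) • ((fderiv ℝ (fun z => g₁ z u.1 v.1) x.1).comp (ContinuousLinearMap.fst ℝ E₁ E₂))
          + g₁ x.1 u.1 v.1 • (Real.exp (2 * f₁ x) • ((2:ℝ) • fderiv ℝ f₁ x)))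
        + (Real.exp (2 * f₂ x) • ((fderiv ℝ (fun z => g₂ z u.2 v.2) x.2).comp (ContinuousLinearMap.snd ℝ E₁ E₂))
          + g₂ x.2 u.2 v.2 • (Real.exp (2 * f₂ x) • ((2:ℝ) • fderiv ℝ f₂ x)))) x :=
    (h₂.mul h₃).add (h₂'.mul h₃')
  rw [h.fderiv]
  simp only [ContinuousLinearMap.add_apply, ContinuousLinearMap.smul_apply,
    ContinuousLinearMap.coe_comp', Function.comp_apply, ContinuousLinearMap.coe_fst',
    ContinuousLinearMap.coe_snd', smul_eq_mul]
  ring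

end Helpers

section DPhi
set_option linter.unusedSectionVars false
variable {E₁ E₂ : Type*} [NormedAddCommGroup E₁] [NormedSpace ℝ E₁]
  [NormedAddCommGroup E₂] [NormedSpace ℝ E₂]
  {g₁ : E₁ → E₁ → E₁ → ℝ} {g₂ : E₂ → E₂ → E₂ → ℝ}
  {f₁ f₂ : E₁ × E₂ → ℝ}

theorem dA (hg₁ : IsRiemannianMetric g₁) (hg₂ : IsRiemannianMetric g₂)
    (hf₁ : ContDiff ℝ ∞ f₁) (hf₂ : ContDiff ℝ ∞ f₂) (x : E₁ × E₂)
    (u₁ : E₁) (v : E₁ × E₂) (d₂ : E₂) :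
    fderiv ℝ (fun y => conformalProductMetric f₁ f₂ g₁ g₂ y (u₁, 0) v) x (0, d₂)
      = 2 * fderiv ℝ f₁ x (0, d₂) * (Real.exp (2 * f₁ x) * g₁ x.1 u₁ v.1) := by
  rw [dconst hg₁ hg₂ hf₁ hf₂ x (u₁, 0) v (0, d₂)]
  simp [hg₂.zero_left]

theorem dB (hg₁ : IsRiemannianMetric g₁) (hg₂ : IsRiemannianMetric g₂)
    (hf₁ : ContDiff ℝ ∞ f₁) (hf₂ : ContDiff ℝ ∞ f₂) (x : E₁ × E₂)
    (u : E₁ × E₂) (v₂ : E₂) (d₁ : E₁) :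
    fderiv ℝ (fun y => conformalProductMetric f₁ f₂ g₁ g₂ y u (0, v₂)) x (d₁, 0)
      = 2 * fderiv ℝ f₂ x (d₁, 0) * (Real.exp (2 * f₂ x) * g₂ x.2 u.2 v₂) := by
  rw [dconst hg₁ hg₂ hf₁ hf₂ x u (0, v₂) (d₁, 0)]
  simp [hg₁.zero_right]

theorem dzero₁ (hg₁ : IsRiemannianMetric g₁) (hg₂ : IsRiemannianMetric g₂)
    (x : E₁ × E₂) (p₁ : E₁) (q₂ : E₂) (d : E₁ × E₂) :
    fderiv ℝ (fun y => conformalProductMetric f₁ f₂ g₁ g₂ y (p₁, 0) (0, q₂)) x d = 0 := by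
  have e : (fun y => conformalProductMetric f₁ f₂ g₁ g₂ y ((p₁, 0) : E₁ × E₂) (((0:E₁), q₂)))
      = fun _ => (0:ℝ) := by
    funext y; simp [conformalProductMetric, hg₁.zero_right, hg₂.zero_left]
  rw [e, fderiv_const_apply]
  simp

theorem dzero₂ (hg₁ : IsRiemannianMetric g₁) (hg₂ : IsRiemannianMetric g₂)
    (x : E₁ × E₂) (q₂ : E₂) (p₁ : E₁) (d : E₁ × E₂) :
    fderiv ℝ (fun y => conformalProductMetric f₁ f₂ g₁ g₂ y (0, q₂) (p₁, 0)) x d = 0 := by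
  have e : (fun y => conformalProductMetric f₁ f₂ g₁ g₂ y (((0:E₁), q₂)) ((p₁, 0) : E₁ × E₂))
      = fun _ => (0:ℝ) := by
    funext y; simp [conformalProductMetric, hg₁.zero_left, hg₂.zero_right]
  rw [e, fderiv_const_apply]
  simp

end DPhi

section DPhi2
set_option linter.unusedSectionVars false
variable {E₁ E₂ : Type*} [NormedAddCommGroup E₁] [NormedSpace ℝ E₁]
  [NormedAddCommGroup E₂] [NormedSpace ℝ E₂]
  {g₁ : E₁ → E₁ → E₁ → ℝ} {g₂ : E₂ → E₂ → E₂ → ℝ}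
  {f₁ f₂ : E₁ × E₂ → ℝ}

theorem dA' (hg₁ : IsRiemannianMetric g₁) (hg₂ : IsRiemannianMetric g₂)
    (hf₁ : ContDiff ℝ ∞ f₁) (hf₂ : ContDiff ℝ ∞ f₂) (x : E₁ × E₂)
    (u₂ : E₂) (v : E₁ × E₂) (d₁ : E₁) :
    fderiv ℝ (fun y => conformalProductMetric f₁ f₂ g₁ g₂ y (0, u₂) v) x (d₁, 0)
      = 2 * fderiv ℝ f₂ x (d₁, 0) * (Real.exp (2 * f₂ x) * g₂ x.2 u₂ v.2) := by
  rw [dconst hg₁ hg₂ hf₁ hf₂ x (0, u₂) v (d₁, 0)]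
  simp [hg₁.zero_left]

theorem dB' (hg₁ : IsRiemannianMetric g₁) (hg₂ : IsRiemannianMetric g₂)
    (hf₁ : ContDiff ℝ ∞ f₁) (hf₂ : ContDiff ℝ ∞ f₂) (x : E₁ × E₂)
    (u : E₁ × E₂) (v₁ : E₁) (d₂ : E₂) :
    fderiv ℝ (fun y => conformalProductMetric f₁ f₂ g₁ g₂ y u (v₁, 0)) x (0, d₂)
      = 2 * fderiv ℝ f₁ x (0, d₂) * (Real.exp (2 * f₁ x) * g₁ x.1 u.1 v₁) := by
  rw [dconst hg₁ hg₂ hf₁ hf₂ x u (v₁, 0) (0, d₂)]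
  simp [hg₂.zero_right]

end DPhi2

section Comp1
set_option linter.unusedSectionVars false
set_option maxHeartbeats 1000000
variable {E₁ E₂ : Type*} [NormedAddCommGroup E₁] [NormedSpace ℝ E₁]
  [NormedAddCommGroup E₂] [NormedSpace ℝ E₂]
  {g₁ : E₁ → E₁ → E₁ → ℝ} {g₂ : E₂ → E₂ → E₂ → ℝ}
  {f₁ f₂ : E₁ × E₂ → ℝ}

local notation "G" => conformalProductMetric f₁ f₂ g₁ g₂

theorem comp1 (hg₁ : IsRiemannianMetric g₁) (hg₂ : IsRiemannianMetric g₂)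
    (hf₁ : ContDiff ℝ ∞ f₁) (hf₂ : ContDiff ℝ ∞ f₂)
    {Dg : (E₁ × E₂ → E₁ × E₂) → (E₁ × E₂ → E₁ × E₂) → (E₁ × E₂ → E₁ × E₂)}
    (hDg : IsLeviCivita (conformalProductMetric f₁ f₂ g₁ g₂) Dg)
    (X : E₁ × E₂ → E₁ × E₂) (X₂ : E₂ → E₂) (hX : ContDiff ℝ ∞ X) (hX₂ : ContDiff ℝ ∞ X₂)
    (x : E₁ × E₂) (w₁ : E₁) :
    Real.exp (2 * f₁ x) * g₁ x.1 ((Dg X (liftVF₂ (E₁ := E₁) X₂) x).1) w₁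
      = fderiv ℝ f₁ x (0, X₂ x.2) * (Real.exp (2 * f₁ x) * g₁ x.1 w₁ (X x).1)
        - fderiv ℝ f₂ x (w₁, 0) * (Real.exp (2 * f₂ x) * g₂ x.2 (X x).2 (X₂ x.2)) := by
  have hd : (∞ : WithTop ℕ∞) ≠ 0 := by simp
  have hY : ContDiff ℝ ∞ (liftVF₂ (E₁ := E₁) X₂) := by
    unfold liftVF₂; exact contDiff_const.prodMk (hX₂.comp contDiff_snd)
  have hXa : ContDiff ℝ ∞ (fun y : E₁ × E₂ => ((X y).1, (0:E₂))) :=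
    ContDiff.prodMk (contDiff_fst.comp hX) contDiff_const
  have hYx : liftVF₂ (E₁ := E₁) X₂ x = ((0:E₁), X₂ x.2) := rfl
  -- derivative of the lift
  have hYd : HasFDerivAt (liftVF₂ (E₁ := E₁) X₂)
      ((0 : (E₁ × E₂) →L[ℝ] E₁).prod ((fderiv ℝ X₂ x.2).comp (ContinuousLinearMap.snd ℝ E₁ E₂))) x :=
    (hasFDerivAt_const (0:E₁) x).prodMk
      ((((hX₂.differentiable hd) x.2).hasFDerivAt).comp x hasFDerivAt_snd)
  have hYder : ∀ v : E₁ × E₂, fderiv ℝ (liftVF₂ (E₁ := E₁) X₂) x v = ((0:E₁), fderiv ℝ X₂ x.2 v.2) := by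
    intro v; rw [hYd.fderiv]; simp
  have hXad : ∀ v : E₁ × E₂,
      fderiv ℝ (fun y : E₁ × E₂ => ((X y).1, (0:E₂))) x v = ((fderiv ℝ X x v).1, (0:E₂)) := by
    intro v
    have h : HasFDerivAt (fun y : E₁ × E₂ => ((X y).1, (0:E₂)))
        (((ContinuousLinearMap.fst ℝ E₁ E₂).comp (fderiv ℝ X x)).prod 0) x :=
      (hasFDerivAt_fst.comp x ((hX.differentiable hd x).hasFDerivAt)).prodMk
        (hasFDerivAt_const (0:E₂) x)
    rw [h.fderiv]; simp
  -- abbreviations for scalars (only in comments):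
  -- a = exp(2 f₁ x), b = exp(2 f₂ x), α = fderiv f₁ x (0, X₂ x.2), β = fderiv f₂ x (w₁,0)
  -- K3 : G x (Dg C(w₁,0) C(0,z₂) x) ((X x).1, 0) = α * (a * g₁ x.1 w₁ (X x).1)
  have K3 : G x (Dg (fun _ => ((w₁, 0) : E₁ × E₂)) (fun _ => (((0:E₁), X₂ x.2))) x) ((X x).1, (0:E₂))
      = fderiv ℝ f₁ x (0, X₂ x.2) * (Real.exp (2 * f₁ x) * g₁ x.1 w₁ (X x).1) := by
    have h := konst hDg hg₁ hg₂ x ((w₁, 0)) (((0:E₁), X₂ x.2)) (((X x).1, (0:E₂)))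
    rw [dzero₂ hg₁ hg₂ x (X₂ x.2) (X x).1 ((w₁,0)),
        dA hg₁ hg₂ hf₁ hf₂ x w₁ (((X x).1, (0:E₂))) (X₂ x.2),
        dzero₁ hg₁ hg₂ x w₁ (X₂ x.2) (((X x).1, (0:E₂)))] at h
    dsimp only at h
    linarith
  -- K4 : G x (Dg C(w₁,0) C(X x) x) (0, z₂) = β * (b * g₂ x.2 (X x).2 z₂) - α * (a * g₁ x.1 w₁ (X x).1)
  have K4 : G x (Dg (fun _ => ((w₁, 0) : E₁ × E₂)) (fun _ => X x) x) ((0:E₁), X₂ x.2)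
      = fderiv ℝ f₂ x (w₁, 0) * (Real.exp (2 * f₂ x) * g₂ x.2 (X x).2 (X₂ x.2))
        - fderiv ℝ f₁ x (0, X₂ x.2) * (Real.exp (2 * f₁ x) * g₁ x.1 w₁ (X x).1) := by
    have h := konst hDg hg₁ hg₂ x ((w₁, 0)) (X x) (((0:E₁), X₂ x.2))
    rw [dB hg₁ hg₂ hf₁ hf₂ x (X x) (X₂ x.2) w₁,
        dzero₁ hg₁ hg₂ x w₁ (X₂ x.2) (X x),
        dA hg₁ hg₂ hf₁ hf₂ x w₁ (X x) (X₂ x.2)] at h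
    linarith
  -- q-step : G x (Dg Y C(w₁,0) x) (X x) = α * (a * g₁ x.1 w₁ (X x).1) + β * (b * g₂ x.2 (X x).2 z₂)
  have qX : G x (Dg (liftVF₂ (E₁ := E₁) X₂) (fun _ => ((w₁, 0) : E₁ × E₂)) x) (X x)
      = fderiv ℝ f₁ x (0, X₂ x.2) * (Real.exp (2 * f₁ x) * g₁ x.1 w₁ (X x).1)
        + fderiv ℝ f₂ x (w₁, 0) * (Real.exp (2 * f₂ x) * g₂ x.2 (X x).2 (X₂ x.2)) := by
    have c1 : fderiv ℝ (fun y => G y ((w₁, 0) : E₁ × E₂) (X x)) x ((0:E₁), X₂ x.2)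
        = G x (Dg (liftVF₂ (E₁ := E₁) X₂) (fun _ => ((w₁, 0) : E₁ × E₂)) x) (X x)
          + G x ((w₁, 0) : E₁ × E₂) (Dg (liftVF₂ (E₁ := E₁) X₂) (fun _ => X x) x) :=
      hDg.compat (liftVF₂ (E₁ := E₁) X₂) _ _ hY contDiff_const contDiff_const x
    rw [dA hg₁ hg₂ hf₁ hf₂ x w₁ (X x) (X₂ x.2)] at c1
    have c2 : fderiv ℝ (fun y => G y (liftVF₂ (E₁ := E₁) X₂ y) ((w₁, 0) : E₁ × E₂)) x (X x)
        = G x (Dg (fun _ => X x) (liftVF₂ (E₁ := E₁) X₂) x) ((w₁, 0) : E₁ × E₂)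
          + G x (liftVF₂ (E₁ := E₁) X₂ x) (Dg (fun _ => X x) (fun _ => ((w₁, 0) : E₁ × E₂)) x) :=
      hDg.compat (fun _ => X x) (liftVF₂ (E₁ := E₁) X₂) _ contDiff_const hY contDiff_const x
    have zY : (fun y => G y (liftVF₂ (E₁ := E₁) X₂ y) ((w₁, 0) : E₁ × E₂)) = fun _ => (0:ℝ) := by
      funext y; simp [conformalProductMetric, liftVF₂, hg₁.zero_left, hg₂.zero_right]
    rw [zY, fderiv_const_apply, hYx] at c2
    simp only [ContinuousLinearMap.zero_apply] at c2
    -- torsion between C(X x) and Y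
    have t1 := hDg.torsion_free (fun _ => X x) (liftVF₂ (E₁ := E₁) X₂) contDiff_const hY x
    rw [hYder (X x), fderiv_const_apply, hYx] at t1
    simp only [ContinuousLinearMap.zero_apply, sub_zero] at t1
    have t1' : Dg (fun _ => X x) (liftVF₂ (E₁ := E₁) X₂) x
        = Dg (liftVF₂ (E₁ := E₁) X₂) (fun _ => X x) x + ((0:E₁), fderiv ℝ X₂ x.2 (X x).2) := by
      have := sub_eq_iff_eq_add.mp t1
      rw [this]; abel
    rw [t1', Gaddl hg₁ hg₂ x] at c2
    rw [Gp1 hg₂ x (((0:E₁), fderiv ℝ X₂ x.2 (X x).2)) w₁] at c2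
    simp only [hg₁.zero_left, mul_zero, add_zero] at c2
    -- c2 : 0 = G x (Dg Y C(Xx) x) (w₁,0) + G x (0,z₂) (Dg C(Xx) C(w₁,0) x)
    rw [Gsymm hg₁ hg₂ x (((0:E₁), X₂ x.2)) (Dg (fun _ => X x) (fun _ => ((w₁, 0) : E₁ × E₂)) x),
        dg_const_comm hDg x (X x) ((w₁, 0))] at c2
    rw [K4] at c2
    -- c1's last term
    rw [Gsymm hg₁ hg₂ x ((w₁, 0) : E₁ × E₂) (Dg (liftVF₂ (E₁ := E₁) X₂) (fun _ => X x) x)] at c1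
    linarith
  -- Φ-step
  have E5 : G x (Dg (fun _ => ((w₁, 0) : E₁ × E₂)) (fun y : E₁ × E₂ => ((X y).1, (0:E₂))) x) ((0:E₁), X₂ x.2)
      = -(fderiv ℝ f₁ x (0, X₂ x.2) * (Real.exp (2 * f₁ x) * g₁ x.1 w₁ (X x).1)) := by
    have c : fderiv ℝ (fun y => G y ((X y).1, (0:E₂)) (((0:E₁), X₂ x.2))) x ((w₁, 0) : E₁ × E₂)
        = G x (Dg (fun _ => ((w₁, 0) : E₁ × E₂)) (fun y : E₁ × E₂ => ((X y).1, (0:E₂))) x) (((0:E₁), X₂ x.2))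
          + G x ((X x).1, (0:E₂)) (Dg (fun _ => ((w₁, 0) : E₁ × E₂)) (fun _ => (((0:E₁), X₂ x.2))) x) :=
      hDg.compat (fun _ => ((w₁, 0) : E₁ × E₂)) _ _ contDiff_const hXa contDiff_const x
    have zXa : (fun y => G y ((X y).1, (0:E₂)) (((0:E₁), X₂ x.2))) = fun _ => (0:ℝ) := by
      funext y; simp [conformalProductMetric, hg₁.zero_right, hg₂.zero_left]
    rw [zXa, fderiv_const_apply] at c
    simp only [ContinuousLinearMap.zero_apply] at c
    rw [Gsymm hg₁ hg₂ x ((X x).1, (0:E₂)) (Dg (fun _ => ((w₁, 0) : E₁ × E₂)) (fun _ => (((0:E₁), X₂ x.2))) x), K3] at c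
    linarith
  have E3 : G x (Dg (fun y : E₁ × E₂ => ((X y).1, (0:E₂))) (fun _ => (((0:E₁), X₂ x.2))) x) ((w₁, 0) : E₁ × E₂)
      = fderiv ℝ f₁ x (0, X₂ x.2) * (Real.exp (2 * f₁ x) * g₁ x.1 w₁ (X x).1) := by
    have c : fderiv ℝ (fun y => G y (((0:E₁), X₂ x.2)) ((w₁, 0) : E₁ × E₂)) x (((X x).1, (0:E₂)) : E₁ × E₂)
        = G x (Dg (fun y : E₁ × E₂ => ((X y).1, (0:E₂))) (fun _ => (((0:E₁), X₂ x.2))) x) ((w₁, 0) : E₁ × E₂)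
          + G x (((0:E₁), X₂ x.2)) (Dg (fun y : E₁ × E₂ => ((X y).1, (0:E₂))) (fun _ => ((w₁, 0) : E₁ × E₂)) x) :=
      hDg.compat _ _ _ hXa contDiff_const contDiff_const x
    rw [dzero₂ hg₁ hg₂ x (X₂ x.2) w₁ (((X x).1, (0:E₂)))] at c
    -- torsion (Xa, C(w₁,0))
    have t := hDg.torsion_free (fun y : E₁ × E₂ => ((X y).1, (0:E₂))) (fun _ => ((w₁, 0) : E₁ × E₂)) hXa contDiff_const x
    rw [fderiv_const_apply, hXad ((w₁, 0))] at t
    simp only [ContinuousLinearMap.zero_apply, zero_sub] at t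
    have t' : Dg (fun y : E₁ × E₂ => ((X y).1, (0:E₂))) (fun _ => ((w₁, 0) : E₁ × E₂)) x
        = Dg (fun _ => ((w₁, 0) : E₁ × E₂)) (fun y : E₁ × E₂ => ((X y).1, (0:E₂))) x
          - ((fderiv ℝ X x ((w₁, 0))).1, (0:E₂)) := by
      have := sub_eq_iff_eq_add.mp t
      rw [this]; abel
    rw [Gsymm hg₁ hg₂ x (((0:E₁), X₂ x.2))
          (Dg (fun y : E₁ × E₂ => ((X y).1, (0:E₂))) (fun _ => ((w₁, 0) : E₁ × E₂)) x), t',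
        Gsubl hg₁ hg₂ x, E5] at c
    rw [Gp2 hg₁ x (((fderiv ℝ X x ((w₁, 0))).1, (0:E₂))) (X₂ x.2)] at c
    simp only [hg₂.zero_left, mul_zero, sub_zero] at c
    linarith
  -- E2 : G x (Dg C(0,z₂) Xa x) (w₁,0) = α * (a * g₁ x.1 w₁ (X x).1) + a * g₁ x.1 (fderiv X x (0,z₂)).1 w₁
  have E2 : G x (Dg (fun _ => (((0:E₁), X₂ x.2) : E₁ × E₂)) (fun y : E₁ × E₂ => ((X y).1, (0:E₂))) x) ((w₁, 0) : E₁ × E₂)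
      = fderiv ℝ f₁ x (0, X₂ x.2) * (Real.exp (2 * f₁ x) * g₁ x.1 w₁ (X x).1)
        + Real.exp (2 * f₁ x) * g₁ x.1 ((fderiv ℝ X x ((0:E₁), X₂ x.2)).1) w₁ := by
    have t := hDg.torsion_free (fun _ => (((0:E₁), X₂ x.2) : E₁ × E₂)) (fun y : E₁ × E₂ => ((X y).1, (0:E₂))) contDiff_const hXa x
    rw [fderiv_const_apply, hXad (((0:E₁), X₂ x.2))] at t
    simp only [ContinuousLinearMap.zero_apply, sub_zero] at t
    have t' : Dg (fun _ => (((0:E₁), X₂ x.2) : E₁ × E₂)) (fun y : E₁ × E₂ => ((X y).1, (0:E₂))) x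
        = Dg (fun y : E₁ × E₂ => ((X y).1, (0:E₂))) (fun _ => (((0:E₁), X₂ x.2) : E₁ × E₂)) x
          + ((fderiv ℝ X x (((0:E₁), X₂ x.2))).1, (0:E₂)) := by
      have := sub_eq_iff_eq_add.mp t
      rw [this]; abel
    rw [t', Gaddl hg₁ hg₂ x, E3, Gp1 hg₂ x (((fderiv ℝ X x (((0:E₁), X₂ x.2))).1, (0:E₂))) w₁]
  -- Φ : fderiv (fun y => G y (X y) (w₁,0)) x (0, z₂) = 2 α (a g₁ w₁ X1) + a g₁ (fX(0,z₂)).1 w₁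
  have PHI : fderiv ℝ (fun y => G y (X y) ((w₁, 0) : E₁ × E₂)) x ((0:E₁), X₂ x.2)
      = 2 * (fderiv ℝ f₁ x (0, X₂ x.2) * (Real.exp (2 * f₁ x) * g₁ x.1 w₁ (X x).1))
        + Real.exp (2 * f₁ x) * g₁ x.1 ((fderiv ℝ X x ((0:E₁), X₂ x.2)).1) w₁ := by
    have c : fderiv ℝ (fun y => G y ((X y).1, (0:E₂)) ((w₁, 0) : E₁ × E₂)) x (((0:E₁), X₂ x.2))
        = G x (Dg (fun _ => (((0:E₁), X₂ x.2) : E₁ × E₂)) (fun y : E₁ × E₂ => ((X y).1, (0:E₂))) x) ((w₁, 0) : E₁ × E₂)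
          + G x ((X x).1, (0:E₂)) (Dg (fun _ => (((0:E₁), X₂ x.2) : E₁ × E₂)) (fun _ => ((w₁, 0) : E₁ × E₂)) x) :=
      hDg.compat _ _ _ contDiff_const hXa contDiff_const x
    have FF : (fun y => G y ((X y).1, (0:E₂)) ((w₁, 0) : E₁ × E₂))
        = fun y => G y (X y) ((w₁, 0) : E₁ × E₂) := by
      funext y; simp [conformalProductMetric, hg₂.zero_right]
    rw [FF] at c
    rw [Gsymm hg₁ hg₂ x ((X x).1, (0:E₂)) (Dg (fun _ => (((0:E₁), X₂ x.2) : E₁ × E₂)) (fun _ => ((w₁, 0) : E₁ × E₂)) x),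
        dg_const_comm hDg x (((0:E₁), X₂ x.2)) ((w₁, 0)), K3, E2] at c
    linarith
  -- m1 : compat(Y, X, C(w₁,0))
  have m1 : fderiv ℝ (fun y => G y (X y) ((w₁, 0) : E₁ × E₂)) x ((0:E₁), X₂ x.2)
      = G x (Dg (liftVF₂ (E₁ := E₁) X₂) X x) ((w₁, 0) : E₁ × E₂)
        + G x (X x) (Dg (liftVF₂ (E₁ := E₁) X₂) (fun _ => ((w₁, 0) : E₁ × E₂)) x) :=
    hDg.compat (liftVF₂ (E₁ := E₁) X₂) X _ hY hX contDiff_const x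
  rw [PHI, Gsymm hg₁ hg₂ x (X x) (Dg (liftVF₂ (E₁ := E₁) X₂) (fun _ => ((w₁, 0) : E₁ × E₂)) x), qX] at m1
  -- m2 : torsion (X, Y)
  have t2 := hDg.torsion_free X (liftVF₂ (E₁ := E₁) X₂) hX hY x
  rw [hYder (X x), hYx] at t2
  have t2' : Dg X (liftVF₂ (E₁ := E₁) X₂) x
      = Dg (liftVF₂ (E₁ := E₁) X₂) X x
        + (((0:E₁), fderiv ℝ X₂ x.2 (X x).2) - fderiv ℝ X x (((0:E₁), X₂ x.2))) := by
    have := sub_eq_iff_eq_add.mp t2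
    rw [this]; abel
  have final : G x (Dg X (liftVF₂ (E₁ := E₁) X₂) x) ((w₁, 0) : E₁ × E₂)
      = fderiv ℝ f₁ x (0, X₂ x.2) * (Real.exp (2 * f₁ x) * g₁ x.1 w₁ (X x).1)
        - fderiv ℝ f₂ x (w₁, 0) * (Real.exp (2 * f₂ x) * g₂ x.2 (X x).2 (X₂ x.2)) := by
    rw [t2', Gaddl hg₁ hg₂ x, Gsubl hg₁ hg₂ x,
        Gp1 hg₂ x (((0:E₁), fderiv ℝ X₂ x.2 (X x).2)) w₁,
        Gp1 hg₂ x (fderiv ℝ X x (((0:E₁), X₂ x.2))) w₁]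
    simp only [hg₁.zero_left, mul_zero]
    linarith
  rw [Gp1 hg₂ x (Dg X (liftVF₂ (E₁ := E₁) X₂) x) w₁] at final
  exact final

end Comp1

section Comp2
set_option linter.unusedSectionVars false
set_option maxHeartbeats 1000000
variable {E₁ E₂ : Type*} [NormedAddCommGroup E₁] [NormedSpace ℝ E₁]
  [NormedAddCommGroup E₂] [NormedSpace ℝ E₂]
  {g₁ : E₁ → E₁ → E₁ → ℝ} {g₂ : E₂ → E₂ → E₂ → ℝ}
  {f₁ f₂ : E₁ × E₂ → ℝ}

local notation "G" => conformalProductMetric f₁ f₂ g₁ g₂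

theorem comp2 (hg₁ : IsRiemannianMetric g₁) (hg₂ : IsRiemannianMetric g₂)
    (hf₁ : ContDiff ℝ ∞ f₁) (hf₂ : ContDiff ℝ ∞ f₂)
    {Dg : (E₁ × E₂ → E₁ × E₂) → (E₁ × E₂ → E₁ × E₂) → (E₁ × E₂ → E₁ × E₂)}
    (hDg : IsLeviCivita (conformalProductMetric f₁ f₂ g₁ g₂) Dg)
    (X : E₁ × E₂ → E₁ × E₂) (X₁ : E₁ → E₁) (hX : ContDiff ℝ ∞ X) (hX₁ : ContDiff ℝ ∞ X₁)
    (x : E₁ × E₂) (w₂ : E₂) :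
    Real.exp (2 * f₂ x) * g₂ x.2 ((Dg X (liftVF₁ (E₂ := E₂) X₁) x).2) w₂
      = fderiv ℝ f₂ x (X₁ x.1, 0) * (Real.exp (2 * f₂ x) * g₂ x.2 w₂ (X x).2)
        - fderiv ℝ f₁ x (0, w₂) * (Real.exp (2 * f₁ x) * g₁ x.1 (X x).1 (X₁ x.1)) := by
  have hd : (∞ : WithTop ℕ∞) ≠ 0 := by simp
  have hY : ContDiff ℝ ∞ (liftVF₁ (E₂ := E₂) X₁) := by
    unfold liftVF₁; exact (hX₁.comp contDiff_fst).prodMk contDiff_const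
  have hXa : ContDiff ℝ ∞ (fun y : E₁ × E₂ => ((0:E₁), (X y).2)) :=
    ContDiff.prodMk contDiff_const (contDiff_snd.comp hX)
  have hYx : liftVF₁ (E₂ := E₂) X₁ x = (X₁ x.1, (0:E₂)) := rfl
  -- derivative of the lift
  have hYd : HasFDerivAt (liftVF₁ (E₂ := E₂) X₁)
      (((fderiv ℝ X₁ x.1).comp (ContinuousLinearMap.fst ℝ E₁ E₂)).prod
        (0 : (E₁ × E₂) →L[ℝ] E₂)) x :=
    ((((hX₁.differentiable hd) x.1).hasFDerivAt).comp x hasFDerivAt_fst).prodMk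
      (hasFDerivAt_const (0:E₂) x)
  have hYder : ∀ v : E₁ × E₂, fderiv ℝ (liftVF₁ (E₂ := E₂) X₁) x v = (fderiv ℝ X₁ x.1 v.1, (0:E₂)) := by
    intro v; rw [hYd.fderiv]; simp
  have hXad : ∀ v : E₁ × E₂,
      fderiv ℝ (fun y : E₁ × E₂ => ((0:E₁), (X y).2)) x v = ((0:E₁), (fderiv ℝ X x v).2) := by
    intro v
    have h : HasFDerivAt (fun y : E₁ × E₂ => ((0:E₁), (X y).2))
        ((0 : (E₁ × E₂) →L[ℝ] E₁).prod
          ((ContinuousLinearMap.snd ℝ E₁ E₂).comp (fderiv ℝ X x))) x :=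
      (hasFDerivAt_const (0:E₁) x).prodMk
        (hasFDerivAt_snd.comp x ((hX.differentiable hd x).hasFDerivAt))
    rw [h.fderiv]; simp
  -- abbreviations for scalars (only in comments):
  -- a = exp(2 f₂ x), b = exp(2 f₁ x), α = fderiv f₂ x (X₁ x.1, 0), β = fderiv f₁ x (0, w₂)
  -- K3 : G x (Dg C(0, w₂) C(0,z₂) x) ((X x).2, 0) = α * (a * g₂ x.2 w₂ (X x).2)
  have K3 : G x (Dg (fun _ => (((0:E₁), w₂) : E₁ × E₂)) (fun _ => ((X₁ x.1, (0:E₂)))) x) ((0:E₁), (X x).2)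
      = fderiv ℝ f₂ x (X₁ x.1, 0) * (Real.exp (2 * f₂ x) * g₂ x.2 w₂ (X x).2) := by
    have h := konst hDg hg₁ hg₂ x (((0:E₁), w₂)) ((X₁ x.1, (0:E₂))) (((0:E₁), (X x).2))
    rw [dzero₁ hg₁ hg₂ x (X₁ x.1) (X x).2 (((0:E₁), w₂)),
        dA' hg₁ hg₂ hf₁ hf₂ x w₂ (((0:E₁), (X x).2)) (X₁ x.1),
        dzero₂ hg₁ hg₂ x w₂ (X₁ x.1) (((0:E₁), (X x).2))] at h
    dsimp only at h
    linarith
  -- K4 : G x (Dg C(0, w₂) C(X x) x) (0, z₂) = β * (b * g₁ x.1 (X x).1 z₂) - α * (a * g₂ x.2 w₂ (X x).2)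
  have K4 : G x (Dg (fun _ => (((0:E₁), w₂) : E₁ × E₂)) (fun _ => X x) x) (X₁ x.1, (0:E₂))
      = fderiv ℝ f₁ x (0, w₂) * (Real.exp (2 * f₁ x) * g₁ x.1 (X x).1 (X₁ x.1))
        - fderiv ℝ f₂ x (X₁ x.1, 0) * (Real.exp (2 * f₂ x) * g₂ x.2 w₂ (X x).2) := by
    have h := konst hDg hg₁ hg₂ x (((0:E₁), w₂)) (X x) ((X₁ x.1, (0:E₂)))
    rw [dB' hg₁ hg₂ hf₁ hf₂ x (X x) (X₁ x.1) w₂,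
        dzero₂ hg₁ hg₂ x w₂ (X₁ x.1) (X x),
        dA' hg₁ hg₂ hf₁ hf₂ x w₂ (X x) (X₁ x.1)] at h
    linarith
  -- q-step : G x (Dg Y C(0, w₂) x) (X x) = α * (a * g₂ x.2 w₂ (X x).2) + β * (b * g₁ x.1 (X x).1 z₂)
  have qX : G x (Dg (liftVF₁ (E₂ := E₂) X₁) (fun _ => (((0:E₁), w₂) : E₁ × E₂)) x) (X x)
      = fderiv ℝ f₂ x (X₁ x.1, 0) * (Real.exp (2 * f₂ x) * g₂ x.2 w₂ (X x).2)
        + fderiv ℝ f₁ x (0, w₂) * (Real.exp (2 * f₁ x) * g₁ x.1 (X x).1 (X₁ x.1)) := by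
    have c1 : fderiv ℝ (fun y => G y (((0:E₁), w₂) : E₁ × E₂) (X x)) x (X₁ x.1, (0:E₂))
        = G x (Dg (liftVF₁ (E₂ := E₂) X₁) (fun _ => (((0:E₁), w₂) : E₁ × E₂)) x) (X x)
          + G x (((0:E₁), w₂) : E₁ × E₂) (Dg (liftVF₁ (E₂ := E₂) X₁) (fun _ => X x) x) :=
      hDg.compat (liftVF₁ (E₂ := E₂) X₁) _ _ hY contDiff_const contDiff_const x
    rw [dA' hg₁ hg₂ hf₁ hf₂ x w₂ (X x) (X₁ x.1)] at c1
    have c2 : fderiv ℝ (fun y => G y (liftVF₁ (E₂ := E₂) X₁ y) (((0:E₁), w₂) : E₁ × E₂)) x (X x)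
        = G x (Dg (fun _ => X x) (liftVF₁ (E₂ := E₂) X₁) x) (((0:E₁), w₂) : E₁ × E₂)
          + G x (liftVF₁ (E₂ := E₂) X₁ x) (Dg (fun _ => X x) (fun _ => (((0:E₁), w₂) : E₁ × E₂)) x) :=
      hDg.compat (fun _ => X x) (liftVF₁ (E₂ := E₂) X₁) _ contDiff_const hY contDiff_const x
    have zY : (fun y => G y (liftVF₁ (E₂ := E₂) X₁ y) (((0:E₁), w₂) : E₁ × E₂)) = fun _ => (0:ℝ) := by
      funext y; simp [conformalProductMetric, liftVF₁, hg₂.zero_left, hg₁.zero_right]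
    rw [zY, fderiv_const_apply, hYx] at c2
    simp only [ContinuousLinearMap.zero_apply] at c2
    -- torsion between C(X x) and Y
    have t1 := hDg.torsion_free (fun _ => X x) (liftVF₁ (E₂ := E₂) X₁) contDiff_const hY x
    rw [hYder (X x), fderiv_const_apply, hYx] at t1
    simp only [ContinuousLinearMap.zero_apply, sub_zero] at t1
    have t1' : Dg (fun _ => X x) (liftVF₁ (E₂ := E₂) X₁) x
        = Dg (liftVF₁ (E₂ := E₂) X₁) (fun _ => X x) x + (fderiv ℝ X₁ x.1 (X x).1, (0:E₂)) := by
      have := sub_eq_iff_eq_add.mp t1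
      rw [this]; abel
    rw [t1', Gaddl hg₁ hg₂ x] at c2
    rw [Gp2 hg₁ x ((fderiv ℝ X₁ x.1 (X x).1, (0:E₂))) w₂] at c2
    simp only [hg₂.zero_left, mul_zero, add_zero] at c2
    -- c2 : 0 = G x (Dg Y C(Xx) x) (0, w₂) + G x (0,z₂) (Dg C(Xx) C(0, w₂) x)
    rw [Gsymm hg₁ hg₂ x ((X₁ x.1, (0:E₂))) (Dg (fun _ => X x) (fun _ => (((0:E₁), w₂) : E₁ × E₂)) x),
        dg_const_comm hDg x (X x) (((0:E₁), w₂))] at c2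
    rw [K4] at c2
    -- c1's last term
    rw [Gsymm hg₁ hg₂ x (((0:E₁), w₂) : E₁ × E₂) (Dg (liftVF₁ (E₂ := E₂) X₁) (fun _ => X x) x)] at c1
    linarith
  -- Φ-step
  have E5 : G x (Dg (fun _ => (((0:E₁), w₂) : E₁ × E₂)) (fun y : E₁ × E₂ => ((0:E₁), (X y).2)) x) (X₁ x.1, (0:E₂))
      = -(fderiv ℝ f₂ x (X₁ x.1, 0) * (Real.exp (2 * f₂ x) * g₂ x.2 w₂ (X x).2)) := by
    have c : fderiv ℝ (fun y => G y ((0:E₁), (X y).2) ((X₁ x.1, (0:E₂)))) x (((0:E₁), w₂) : E₁ × E₂)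
        = G x (Dg (fun _ => (((0:E₁), w₂) : E₁ × E₂)) (fun y : E₁ × E₂ => ((0:E₁), (X y).2)) x) ((X₁ x.1, (0:E₂)))
          + G x ((0:E₁), (X x).2) (Dg (fun _ => (((0:E₁), w₂) : E₁ × E₂)) (fun _ => ((X₁ x.1, (0:E₂)))) x) :=
      hDg.compat (fun _ => (((0:E₁), w₂) : E₁ × E₂)) _ _ contDiff_const hXa contDiff_const x
    have zXa : (fun y => G y ((0:E₁), (X y).2) ((X₁ x.1, (0:E₂)))) = fun _ => (0:ℝ) := by
      funext y; simp [conformalProductMetric, hg₂.zero_right, hg₁.zero_left]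
    rw [zXa, fderiv_const_apply] at c
    simp only [ContinuousLinearMap.zero_apply] at c
    rw [Gsymm hg₁ hg₂ x ((0:E₁), (X x).2) (Dg (fun _ => (((0:E₁), w₂) : E₁ × E₂)) (fun _ => ((X₁ x.1, (0:E₂)))) x), K3] at c
    linarith
  have E3 : G x (Dg (fun y : E₁ × E₂ => ((0:E₁), (X y).2)) (fun _ => ((X₁ x.1, (0:E₂)))) x) (((0:E₁), w₂) : E₁ × E₂)
      = fderiv ℝ f₂ x (X₁ x.1, 0) * (Real.exp (2 * f₂ x) * g₂ x.2 w₂ (X x).2) := by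
    have c : fderiv ℝ (fun y => G y ((X₁ x.1, (0:E₂))) (((0:E₁), w₂) : E₁ × E₂)) x (((0:E₁), (X x).2) : E₁ × E₂)
        = G x (Dg (fun y : E₁ × E₂ => ((0:E₁), (X y).2)) (fun _ => ((X₁ x.1, (0:E₂)))) x) (((0:E₁), w₂) : E₁ × E₂)
          + G x ((X₁ x.1, (0:E₂))) (Dg (fun y : E₁ × E₂ => ((0:E₁), (X y).2)) (fun _ => (((0:E₁), w₂) : E₁ × E₂)) x) :=
      hDg.compat _ _ _ hXa contDiff_const contDiff_const x
    rw [dzero₁ hg₁ hg₂ x (X₁ x.1) w₂ (((0:E₁), (X x).2))] at c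
    -- torsion (Xa, C(0, w₂))
    have t := hDg.torsion_free (fun y : E₁ × E₂ => ((0:E₁), (X y).2)) (fun _ => (((0:E₁), w₂) : E₁ × E₂)) hXa contDiff_const x
    rw [fderiv_const_apply, hXad (((0:E₁), w₂))] at t
    simp only [ContinuousLinearMap.zero_apply, zero_sub] at t
    have t' : Dg (fun y : E₁ × E₂ => ((0:E₁), (X y).2)) (fun _ => (((0:E₁), w₂) : E₁ × E₂)) x
        = Dg (fun _ => (((0:E₁), w₂) : E₁ × E₂)) (fun y : E₁ × E₂ => ((0:E₁), (X y).2)) x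
          - (((0:E₁), (fderiv ℝ X x (((0:E₁), w₂))).2)) := by
      have := sub_eq_iff_eq_add.mp t
      rw [this]; abel
    rw [Gsymm hg₁ hg₂ x ((X₁ x.1, (0:E₂)))
          (Dg (fun y : E₁ × E₂ => ((0:E₁), (X y).2)) (fun _ => (((0:E₁), w₂) : E₁ × E₂)) x), t',
        Gsubl hg₁ hg₂ x, E5] at c
    rw [Gp1 hg₂ x ((((0:E₁), (fderiv ℝ X x (((0:E₁), w₂))).2))) (X₁ x.1)] at c
    simp only [hg₁.zero_left, mul_zero, sub_zero] at c
    linarith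
  -- E2 : G x (Dg C(0,z₂) Xa x) (0, w₂) = α * (a * g₂ x.2 w₂ (X x).2) + a * g₂ x.2 (fderiv X x (0,z₂)).1 w₂
  have E2 : G x (Dg (fun _ => ((X₁ x.1, (0:E₂)) : E₁ × E₂)) (fun y : E₁ × E₂ => ((0:E₁), (X y).2)) x) (((0:E₁), w₂) : E₁ × E₂)
      = fderiv ℝ f₂ x (X₁ x.1, 0) * (Real.exp (2 * f₂ x) * g₂ x.2 w₂ (X x).2)
        + Real.exp (2 * f₂ x) * g₂ x.2 ((fderiv ℝ X x (X₁ x.1, (0:E₂))).2) w₂ := by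
    have t := hDg.torsion_free (fun _ => ((X₁ x.1, (0:E₂)) : E₁ × E₂)) (fun y : E₁ × E₂ => ((0:E₁), (X y).2)) contDiff_const hXa x
    rw [fderiv_const_apply, hXad ((X₁ x.1, (0:E₂)))] at t
    simp only [ContinuousLinearMap.zero_apply, sub_zero] at t
    have t' : Dg (fun _ => ((X₁ x.1, (0:E₂)) : E₁ × E₂)) (fun y : E₁ × E₂ => ((0:E₁), (X y).2)) x
        = Dg (fun y : E₁ × E₂ => ((0:E₁), (X y).2)) (fun _ => ((X₁ x.1, (0:E₂)) : E₁ × E₂)) x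
          + (((0:E₁), (fderiv ℝ X x ((X₁ x.1, (0:E₂)))).2)) := by
      have := sub_eq_iff_eq_add.mp t
      rw [this]; abel
    rw [t', Gaddl hg₁ hg₂ x, E3, Gp2 hg₁ x ((((0:E₁), (fderiv ℝ X x ((X₁ x.1, (0:E₂)))).2))) w₂]
  -- Φ : fderiv (fun y => G y (X y) (0, w₂)) x (0, z₂) = 2 α (a g₂ w₂ X1) + a g₂ (fX(0,z₂)).1 w₂
  have PHI : fderiv ℝ (fun y => G y (X y) (((0:E₁), w₂) : E₁ × E₂)) x (X₁ x.1, (0:E₂))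
      = 2 * (fderiv ℝ f₂ x (X₁ x.1, 0) * (Real.exp (2 * f₂ x) * g₂ x.2 w₂ (X x).2))
        + Real.exp (2 * f₂ x) * g₂ x.2 ((fderiv ℝ X x (X₁ x.1, (0:E₂))).2) w₂ := by
    have c : fderiv ℝ (fun y => G y ((0:E₁), (X y).2) (((0:E₁), w₂) : E₁ × E₂)) x ((X₁ x.1, (0:E₂)))
        = G x (Dg (fun _ => ((X₁ x.1, (0:E₂)) : E₁ × E₂)) (fun y : E₁ × E₂ => ((0:E₁), (X y).2)) x) (((0:E₁), w₂) : E₁ × E₂)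
          + G x ((0:E₁), (X x).2) (Dg (fun _ => ((X₁ x.1, (0:E₂)) : E₁ × E₂)) (fun _ => (((0:E₁), w₂) : E₁ × E₂)) x) :=
      hDg.compat _ _ _ contDiff_const hXa contDiff_const x
    have FF : (fun y => G y ((0:E₁), (X y).2) (((0:E₁), w₂) : E₁ × E₂))
        = fun y => G y (X y) (((0:E₁), w₂) : E₁ × E₂) := by
      funext y; simp [conformalProductMetric, hg₁.zero_right]
    rw [FF] at c
    rw [Gsymm hg₁ hg₂ x ((0:E₁), (X x).2) (Dg (fun _ => ((X₁ x.1, (0:E₂)) : E₁ × E₂)) (fun _ => (((0:E₁), w₂) : E₁ × E₂)) x),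
        dg_const_comm hDg x ((X₁ x.1, (0:E₂))) (((0:E₁), w₂)), K3, E2] at c
    linarith
  -- m1 : compat(Y, X, C(0, w₂))
  have m1 : fderiv ℝ (fun y => G y (X y) (((0:E₁), w₂) : E₁ × E₂)) x (X₁ x.1, (0:E₂))
      = G x (Dg (liftVF₁ (E₂ := E₂) X₁) X x) (((0:E₁), w₂) : E₁ × E₂)
        + G x (X x) (Dg (liftVF₁ (E₂ := E₂) X₁) (fun _ => (((0:E₁), w₂) : E₁ × E₂)) x) :=
    hDg.compat (liftVF₁ (E₂ := E₂) X₁) X _ hY hX contDiff_const x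
  rw [PHI, Gsymm hg₁ hg₂ x (X x) (Dg (liftVF₁ (E₂ := E₂) X₁) (fun _ => (((0:E₁), w₂) : E₁ × E₂)) x), qX] at m1
  -- m2 : torsion (X, Y)
  have t2 := hDg.torsion_free X (liftVF₁ (E₂ := E₂) X₁) hX hY x
  rw [hYder (X x), hYx] at t2
  have t2' : Dg X (liftVF₁ (E₂ := E₂) X₁) x
      = Dg (liftVF₁ (E₂ := E₂) X₁) X x
        + ((fderiv ℝ X₁ x.1 (X x).1, (0:E₂)) - fderiv ℝ X x ((X₁ x.1, (0:E₂)))) := by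
    have := sub_eq_iff_eq_add.mp t2
    rw [this]; abel
  have final : G x (Dg X (liftVF₁ (E₂ := E₂) X₁) x) (((0:E₁), w₂) : E₁ × E₂)
      = fderiv ℝ f₂ x (X₁ x.1, 0) * (Real.exp (2 * f₂ x) * g₂ x.2 w₂ (X x).2)
        - fderiv ℝ f₁ x (0, w₂) * (Real.exp (2 * f₁ x) * g₁ x.1 (X x).1 (X₁ x.1)) := by
    rw [t2', Gaddl hg₁ hg₂ x, Gsubl hg₁ hg₂ x,
        Gp2 hg₁ x ((fderiv ℝ X₁ x.1 (X x).1, (0:E₂))) w₂,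
        Gp2 hg₁ x (fderiv ℝ X x ((X₁ x.1, (0:E₂)))) w₂]
    simp only [hg₂.zero_left, mul_zero]
    linarith
  rw [Gp2 hg₁ x (Dg X (liftVF₁ (E₂ := E₂) X₁) x) w₂] at final
  exact final

end Comp2

/-- Let `g = e^{2f₁}g₁ + e^{2f₂}g₂` be a conformal product metric on `M₁ × M₂`
and `∇` the Weyl connection of `[g]` with Lee form `θ^g = −d₁f₂ − d₂f₁` with respect to `g`,
obtained from the Levi-Civita connection `∇^g` by
`∇_X Y = ∇^g_X Y + θ(X)Y + θ(Y)X − g(X,Y)θ♯`.  Then `∇_{X₁}X₂ = 0` for all vector fields `X₁`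
lifted from `M₁` and `X₂` lifted from `M₂`; in particular `∇` preserves the distributions
`TM₁` and `TM₂`. -/
theorem adapted_weyl_connection_mixed_derivative_zero
    {E₁ E₂ : Type*} [NormedAddCommGroup E₁] [NormedSpace ℝ E₁]
    [NormedAddCommGroup E₂] [NormedSpace ℝ E₂]
    (g₁ : E₁ → E₁ → E₁ → ℝ) (g₂ : E₂ → E₂ → E₂ → ℝ)
    (hg₁ : IsRiemannianMetric g₁) (hg₂ : IsRiemannianMetric g₂)
    (f₁ f₂ : E₁ × E₂ → ℝ) (hf₁ : ContDiff ℝ ∞ f₁) (hf₂ : ContDiff ℝ ∞ f₂)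
    (Dg : (E₁ × E₂ → E₁ × E₂) → (E₁ × E₂ → E₁ × E₂) → (E₁ × E₂ → E₁ × E₂))
    (hDg : IsLeviCivita (conformalProductMetric f₁ f₂ g₁ g₂) Dg)
    -- the Lee form `θ = −d₁f₂ − d₂f₁`
    (θ : E₁ × E₂ → E₁ × E₂ → ℝ)
    (hθ : ∀ x v, θ x v = -(fderiv ℝ f₂ x (v.1, 0)) - fderiv ℝ f₁ x (0, v.2))
    -- the `g`-dual vector field of `θ`
    (θs : E₁ × E₂ → E₁ × E₂)
    (hθs : ∀ x v, conformalProductMetric f₁ f₂ g₁ g₂ x (θs x) v = θ x v)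
    -- the adapted Weyl connection
    (D : (E₁ × E₂ → E₁ × E₂) → (E₁ × E₂ → E₁ × E₂) → (E₁ × E₂ → E₁ × E₂))
    (hD : ∀ X Y x, D X Y x = Dg X Y x + θ x (X x) • Y x + θ x (Y x) • X x
      - conformalProductMetric f₁ f₂ g₁ g₂ x (X x) (Y x) • θs x) :
    (∀ (X₁ : E₁ → E₁) (X₂ : E₂ → E₂), ContDiff ℝ ∞ X₁ → ContDiff ℝ ∞ X₂ → ∀ x,
        D (liftVF₁ X₁) (liftVF₂ X₂) x = 0)
    ∧ (∀ (X : E₁ × E₂ → E₁ × E₂) (X₂ : E₂ → E₂), ContDiff ℝ ∞ X → ContDiff ℝ ∞ X₂ → ∀ x,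
        (D X (liftVF₂ X₂) x).1 = 0)
    ∧ (∀ (X : E₁ × E₂ → E₁ × E₂) (X₁ : E₁ → E₁), ContDiff ℝ ∞ X → ContDiff ℝ ∞ X₁ → ∀ x,
        (D X (liftVF₁ X₁) x).2 = 0) := by

  have hd : (∞ : WithTop ℕ∞) ≠ 0 := by simp
  have part2 : ∀ (X : E₁ × E₂ → E₁ × E₂) (X₂ : E₂ → E₂), ContDiff ℝ ∞ X → ContDiff ℝ ∞ X₂ → ∀ x,
      (D X (liftVF₂ X₂) x).1 = 0 := by
    intro X X₂ hX hX₂ x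
    have key := comp1 hg₁ hg₂ hf₁ hf₂ hDg X X₂ hX hX₂ x
    have hYx : liftVF₂ (E₁ := E₁) X₂ x = ((0:E₁), X₂ x.2) := rfl
    have hθY : θ x (liftVF₂ (E₁ := E₁) X₂ x) = -(fderiv ℝ f₁ x (0, X₂ x.2)) := by
      rw [hθ, hYx]
      have e3 : (((0:E₁), (0:E₂)) : E₁ × E₂) = 0 := rfl
      dsimp only
      rw [e3, (fderiv ℝ f₂ x).map_zero]
      ring
    have hθs1 : ∀ w₁ : E₁, Real.exp (2 * f₁ x) * g₁ x.1 ((θs x).1) w₁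
        = -(fderiv ℝ f₂ x (w₁, 0)) := by
      intro w₁
      have h := hθs x ((w₁, (0:E₂)))
      rw [hθ, Gp1 hg₂ x (θs x) w₁] at h
      dsimp only at h
      have e3 : (((0:E₁), (0:E₂)) : E₁ × E₂) = 0 := rfl
      rw [e3, (fderiv ℝ f₁ x).map_zero] at h
      rw [h]; ring
    have hGXY : conformalProductMetric f₁ f₂ g₁ g₂ x (X x) (liftVF₂ (E₁ := E₁) X₂ x)
        = Real.exp (2 * f₂ x) * g₂ x.2 (X x).2 (X₂ x.2) := by
      rw [hYx, Gp2 hg₁ x (X x) (X₂ x.2)]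
    have expand : (D X (liftVF₂ X₂) x).1
        = (Dg X (liftVF₂ X₂) x).1 + θ x (liftVF₂ (E₁ := E₁) X₂ x) • (X x).1
          - conformalProductMetric f₁ f₂ g₁ g₂ x (X x) (liftVF₂ (E₁ := E₁) X₂ x) • (θs x).1 := by
      rw [hD X (liftVF₂ X₂) x]
      simp only [Prod.fst_sub, Prod.fst_add, Prod.smul_fst]
      rw [show (liftVF₂ (E₁ := E₁) X₂ x).1 = (0:E₁) from rfl, smul_zero, add_zero]
    have hzero : ∀ w₁ : E₁, g₁ x.1 ((D X (liftVF₂ X₂) x).1) w₁ = 0 := by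
      intro w₁
      have hmul : Real.exp (2 * f₁ x) * g₁ x.1 ((D X (liftVF₂ X₂) x).1) w₁ = 0 := by
        rw [expand, hg₁.sub_left, hg₁.add_left, hg₁.smul_left, hg₁.smul_left, hθY, hGXY]
        have hs := hg₁.symm x.1 w₁ (X x).1
        linear_combination key w₁
          - (Real.exp (2 * f₂ x) * g₂ x.2 (X x).2 (X₂ x.2)) * (hθs1 w₁)
          + (fderiv ℝ f₁ x (0, X₂ x.2) * Real.exp (2 * f₁ x)) * hs
      have := mul_eq_zero.mp hmul
      rcases this with h | h
      · exact absurd h (Real.exp_ne_zero _)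
      · exact h
    by_contra hne
    have hp := hg₁.posdef x.1 _ hne
    exact absurd (hzero ((D X (liftVF₂ X₂) x).1)) (ne_of_gt hp)
  have part3 : ∀ (X : E₁ × E₂ → E₁ × E₂) (X₁ : E₁ → E₁), ContDiff ℝ ∞ X → ContDiff ℝ ∞ X₁ → ∀ x,
      (D X (liftVF₁ X₁) x).2 = 0 := by
    intro X X₁ hX hX₁ x
    have key := comp2 hg₁ hg₂ hf₁ hf₂ hDg X X₁ hX hX₁ x
    have hYx : liftVF₁ (E₂ := E₂) X₁ x = (X₁ x.1, (0:E₂)) := rfl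
    have hθY : θ x (liftVF₁ (E₂ := E₂) X₁ x) = -(fderiv ℝ f₂ x (X₁ x.1, 0)) := by
      rw [hθ, hYx]
      have e3 : (((0:E₁), (0:E₂)) : E₁ × E₂) = 0 := rfl
      dsimp only
      rw [e3, (fderiv ℝ f₁ x).map_zero]
      ring
    have hθs2 : ∀ w₂ : E₂, Real.exp (2 * f₂ x) * g₂ x.2 ((θs x).2) w₂
        = -(fderiv ℝ f₁ x (0, w₂)) := by
      intro w₂
      have h := hθs x (((0:E₁), w₂))
      rw [hθ, Gp2 hg₁ x (θs x) w₂] at h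
      dsimp only at h
      have e3 : (((0:E₁), (0:E₂)) : E₁ × E₂) = 0 := rfl
      rw [e3, (fderiv ℝ f₂ x).map_zero] at h
      rw [h]; ring
    have hGXY : conformalProductMetric f₁ f₂ g₁ g₂ x (X x) (liftVF₁ (E₂ := E₂) X₁ x)
        = Real.exp (2 * f₁ x) * g₁ x.1 (X x).1 (X₁ x.1) := by
      rw [hYx, Gp1 hg₂ x (X x) (X₁ x.1)]
    have expand : (D X (liftVF₁ X₁) x).2
        = (Dg X (liftVF₁ X₁) x).2 + θ x (liftVF₁ (E₂ := E₂) X₁ x) • (X x).2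
          - conformalProductMetric f₁ f₂ g₁ g₂ x (X x) (liftVF₁ (E₂ := E₂) X₁ x) • (θs x).2 := by
      rw [hD X (liftVF₁ X₁) x]
      simp only [Prod.snd_sub, Prod.snd_add, Prod.smul_snd]
      rw [show (liftVF₁ (E₂ := E₂) X₁ x).2 = (0:E₂) from rfl, smul_zero, add_zero]
    have hzero : ∀ w₂ : E₂, g₂ x.2 ((D X (liftVF₁ X₁) x).2) w₂ = 0 := by
      intro w₂
      have hmul : Real.exp (2 * f₂ x) * g₂ x.2 ((D X (liftVF₁ X₁) x).2) w₂ = 0 := by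
        rw [expand, hg₂.sub_left, hg₂.add_left, hg₂.smul_left, hg₂.smul_left, hθY, hGXY]
        have hs := hg₂.symm x.2 w₂ (X x).2
        linear_combination key w₂
          - (Real.exp (2 * f₁ x) * g₁ x.1 (X x).1 (X₁ x.1)) * (hθs2 w₂)
          + (fderiv ℝ f₂ x (X₁ x.1, 0) * Real.exp (2 * f₂ x)) * hs
      have := mul_eq_zero.mp hmul
      rcases this with h | h
      · exact absurd h (Real.exp_ne_zero _)
      · exact h
    by_contra hne
    have hp := hg₂.posdef x.2 _ hne
    exact absurd (hzero ((D X (liftVF₁ X₁) x).2)) (ne_of_gt hp)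
  refine ⟨?_, part2, part3⟩
  intro X₁ X₂ hX₁ hX₂ x
  have hs1 : ContDiff ℝ ∞ (liftVF₁ (E₂ := E₂) X₁) := by
    unfold liftVF₁; exact (hX₁.comp contDiff_fst).prodMk contDiff_const
  have hs2 : ContDiff ℝ ∞ (liftVF₂ (E₁ := E₁) X₂) := by
    unfold liftVF₂; exact contDiff_const.prodMk (hX₂.comp contDiff_snd)
  have e1 := part2 (liftVF₁ X₁) X₂ hs1 hX₂ x
  have e2 := part3 (liftVF₂ X₂) X₁ hs2 hX₁ x
  -- the two lifted fields have vanishing crossed derivatives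
  have d2 : fderiv ℝ (liftVF₂ (E₁ := E₁) X₂) x (liftVF₁ (E₂ := E₂) X₁ x) = 0 := by
    have hYd : HasFDerivAt (liftVF₂ (E₁ := E₁) X₂)
        ((0 : (E₁ × E₂) →L[ℝ] E₁).prod
          ((fderiv ℝ X₂ x.2).comp (ContinuousLinearMap.snd ℝ E₁ E₂))) x :=
      (hasFDerivAt_const (0:E₁) x).prodMk
        ((((hX₂.differentiable hd) x.2).hasFDerivAt).comp x hasFDerivAt_snd)
    rw [hYd.fderiv]
    have : (liftVF₁ (E₂ := E₂) X₁ x).2 = (0:E₂) := rfl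
    simp [this]
  have d1 : fderiv ℝ (liftVF₁ (E₂ := E₂) X₁) x (liftVF₂ (E₁ := E₁) X₂ x) = 0 := by
    have hYd : HasFDerivAt (liftVF₁ (E₂ := E₂) X₁)
        (((fderiv ℝ X₁ x.1).comp (ContinuousLinearMap.fst ℝ E₁ E₂)).prod
          (0 : (E₁ × E₂) →L[ℝ] E₂)) x :=
      ((((hX₁.differentiable hd) x.1).hasFDerivAt).comp x hasFDerivAt_fst).prodMk
        (hasFDerivAt_const (0:E₂) x)
    rw [hYd.fderiv]
    have : (liftVF₂ (E₁ := E₁) X₂ x).1 = (0:E₁) := rfl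
    simp [this]
  have hDgc : Dg (liftVF₁ X₁) (liftVF₂ X₂) x = Dg (liftVF₂ X₂) (liftVF₁ X₁) x := by
    have ht := hDg.torsion_free (liftVF₁ X₁) (liftVF₂ X₂) hs1 hs2 x
    rw [d1, d2] at ht
    simpa [sub_eq_zero] using ht
  have hcomm : D (liftVF₁ X₁) (liftVF₂ X₂) x = D (liftVF₂ X₂) (liftVF₁ X₁) x := by
    rw [hD, hD, hDgc, Gsymm hg₁ hg₂ x (liftVF₁ (E₂ := E₂) X₁ x) (liftVF₂ (E₁ := E₁) X₂ x),
      add_right_comm]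
  have : (0 : E₁ × E₂) = ((0:E₁), (0:E₂)) := rfl
  rw [this]
  refine Prod.ext ?_ ?_
  · exact e1
  · rw [hcomm]; exact e2
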